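/- Let λ₁ > 0 and K, S > 0 be constants, and let (n_k), (p_k), (q_k) be sequences of positive integers and (L_k), (s_k) sequences of nonnegative reals with L_k ≤ q_k·K and s_k ≤ S for all k. Define τ_k = λ₁·L_k/(2(n_k + p_k + 2)) and σ̂_k = τ_k + √(τ_k² + s_k²·n_k/(n_k + p_k + 2)). If p_k/n_k → ∞ and q_k/p_k → 0 as k → ∞, then σ̂_k → 0. -/

import Mathlib

open Filter

/-- Section 6.2: the conjugate Spike-and-Slab Lasso MAP estimate of σ tends to 0 when
p_k/n_k → ∞ and q_k/p_k → 0. -/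
theorem stmt_15 (lam1 K S : ℝ) (hlam1 : 0 < lam1) (hK : 0 < K) (hS : 0 < S)
    (n p q : ℕ → ℕ) (hn : ∀ k, 1 ≤ n k) (hp : ∀ k, 1 ≤ p k) (hq : ∀ k, 1 ≤ q k)
    (L s : ℕ → ℝ) (hL0 : ∀ k, 0 ≤ L k) (hs0 : ∀ k, 0 ≤ s k)
    (hLK : ∀ k, L k ≤ (q k : ℝ) * K) (hsS : ∀ k, s k ≤ S)
    (τ : ℕ → ℝ) (hτ : ∀ k, τ k = lam1 * L k / (2 * ((n k : ℝ) + (p k : ℝ) + 2)))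
    (σhat : ℕ → ℝ)
    (hσ : ∀ k, σhat k = τ k +
      Real.sqrt ((τ k) ^ 2 + (s k) ^ 2 * (n k : ℝ) / ((n k : ℝ) + (p k : ℝ) + 2)))
    (hpn : Tendsto (fun k => (p k : ℝ) / (n k : ℝ)) atTop atTop)
    (hqp : Tendsto (fun k => (q k : ℝ) / (p k : ℝ)) atTop (nhds 0)) :
    Tendsto σhat atTop (nhds 0) := by
  have hpk : ∀ k, (0:ℝ) < (p k : ℝ) := fun k => by exact_mod_cast hp k
  have hnk : ∀ k, (0:ℝ) < (n k : ℝ) := fun k => by exact_mod_cast hn k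
  have hnp : ∀ k, (0:ℝ) < (n k : ℝ) + (p k : ℝ) + 2 := fun k => by positivity
  -- τ → 0
  have hτ0 : ∀ k, 0 ≤ τ k := by
    intro k; rw [hτ]
    have := hL0 k; have := (hnp k); positivity
  have hτle : ∀ k, τ k ≤ (lam1 * K / 2) * ((q k:ℝ)/(p k:ℝ)) := by
    intro k; rw [hτ]
    have h1 : lam1 * L k ≤ lam1 * ((q k:ℝ) * K) :=
      mul_le_mul_of_nonneg_left (hLK k) hlam1.le
    have h2 : (2:ℝ) * (p k:ℝ) ≤ 2 * ((n k : ℝ) + (p k : ℝ) + 2) := by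
      have := (hnk k); linarith
    calc lam1 * L k / (2 * ((n k : ℝ) + (p k : ℝ) + 2))
        ≤ lam1 * ((q k:ℝ) * K) / (2 * (p k:ℝ)) := by
          apply div_le_div₀ (by positivity) h1 (by have := hpk k; positivity) h2
      _ = (lam1 * K / 2) * ((q k:ℝ)/(p k:ℝ)) := by
          field_simp
  have hτtend : Tendsto τ atTop (nhds 0) := by
    have := hqp.const_mul (lam1 * K / 2)
    simpa using squeeze_zero hτ0 hτle (by simpa using this)
  -- n/p → 0
  have hnpt : Tendsto (fun k => (n k : ℝ) / (p k : ℝ)) atTop (nhds 0) := by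
    have := hpn.inv_tendsto_atTop
    refine this.congr (fun k => ?_)
    rw [Pi.inv_apply, inv_div]
  -- u → 0
  set u : ℕ → ℝ := fun k => (s k) ^ 2 * (n k : ℝ) / ((n k : ℝ) + (p k : ℝ) + 2) with hu
  have hu0 : ∀ k, 0 ≤ u k := by
    intro k; have := hnp k; have := (hnk k); positivity
  have hule : ∀ k, u k ≤ S ^ 2 * ((n k : ℝ) / (p k : ℝ)) := by
    intro k
    have h1 : (s k) ^ 2 * (n k : ℝ) ≤ S ^ 2 * (n k : ℝ) := by
      have : (s k)^2 ≤ S^2 := pow_le_pow_left₀ (hs0 k) (hsS k) 2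
      exact mul_le_mul_of_nonneg_right this (hnk k).le
    calc u k ≤ S ^ 2 * (n k : ℝ) / ((n k : ℝ) + (p k : ℝ) + 2) := by
          have h2 := hnp k
          show (s k) ^ 2 * (n k : ℝ) / ((n k : ℝ) + (p k : ℝ) + 2) ≤ _
          gcongr
      _ ≤ S ^ 2 * (n k : ℝ) / (p k : ℝ) := by
          have := hpk k; have := hnk k; gcongr; linarith
      _ = S ^ 2 * ((n k : ℝ) / (p k : ℝ)) := by ring
  have hutend : Tendsto u atTop (nhds 0) := by
    have := hnpt.const_mul (S^2)
    exact squeeze_zero hu0 hule (by simpa using this)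
  -- combine
  have hsq : Tendsto (fun k => Real.sqrt ((τ k)^2 + u k)) atTop (nhds 0) := by
    have h1 : Tendsto (fun k => (τ k)^2 + u k) atTop (nhds 0) := by
      simpa using ((hτtend.pow 2).add hutend)
    have := (Real.continuous_sqrt.tendsto 0).comp h1
    simpa [Function.comp_def] using this
  have hfinal : Tendsto (fun k => τ k + Real.sqrt ((τ k)^2 + u k)) atTop (nhds 0) := by
    simpa using hτtend.add hsq
  exact hfinal.congr (fun k => (hσ k).symm)
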